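/- Halving (convergence) property of the fault-tolerant midpoint under exact agreement: let n, f be natural numbers with n > 3f, let x, y : Fin n → ℝ, and let G ⊆ Fin n have complement of cardinality at most f. If x i = y i for every i ∈ G, then |mid_f(x) − mid_f(y)| ≤ (max_{i∈G} x i − min_{i∈G} x i)/2, where mid_f(z) = (z_(f+1) + z_(n−f))/2. (This is the 'convergence property of approximate agreement' invoked in the proofs of Lemma 3 and Lemma 7 of the paper: two nonfaulty nodes that receive identical values from all nonfaulty senders, but possibly different arbitrary values from the at most f faulty senders, compute fault-tolerant midpoints at distance at most half the spread of the nonfaulty values.) -/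

import Mathlib

open Finset

/-- The `k`-th smallest entry (1-indexed, counted with multiplicity) of `x : Fin n → ℝ`. -/
noncomputable def orderStat {n : ℕ} (x : Fin n → ℝ) (k : ℕ) : ℝ :=
  ((Multiset.map x (Finset.univ : Finset (Fin n)).val).sort (· ≤ ·)).getD (k - 1) 0

/-- The `k`-th smallest (1-indexed, with multiplicity) of the `|G|` values `x i`, `i ∈ G`. -/
noncomputable def orderStatOn {n : ℕ} (G : Finset (Fin n)) (x : Fin n → ℝ) (k : ℕ) : ℝ :=
  ((Multiset.map x G.val).sort (· ≤ ·)).getD (k - 1) 0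

/-- The fault-tolerant midpoint `mid_f(x) = (x_(f+1) + x_(n−f))/2`. -/
noncomputable def ftMid (n f : ℕ) (x : Fin n → ℝ) : ℝ :=
  (orderStat x (f + 1) + orderStat x (n - f)) / 2

/-- If the complement of `G` has at most `f` elements and `n > 3f`, then `G` is nonempty. -/
lemma nonempty_of_compl {n f : ℕ} (hn : 3 * f < n) {G : Finset (Fin n)}
    (hG : Gᶜ.card ≤ f) : G.Nonempty := by
  rw [← Finset.card_pos]
  have h := Finset.card_compl G
  simp only [Fintype.card_fin] at h
  omega


section COPYHELPERS

lemma sorted_getElem_mono {l : List ℝ} (hl : l.Pairwise (· ≤ ·)) {i j : ℕ}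
    (hij : i ≤ j) (hj : j < l.length) : l[i]'(lt_of_le_of_lt hij hj) ≤ l[j] := by
  rcases eq_or_lt_of_le hij with rfl | h
  · exact le_refl _
  · exact (List.pairwise_iff_getElem.mp hl) i j _ hj h

lemma sorted_le_of_countP {l : List ℝ} (hl : l.Pairwise (· ≤ ·)) {k : ℕ} (hk : k < l.length)
    {a : ℝ} (h : k + 1 ≤ l.countP (fun e => decide (e ≤ a))) : l[k] ≤ a := by
  by_contra hc
  push_neg at hc
  have hlen := (List.length_drop (i := k) (l := l))
  have hdrop : (l.drop k).countP (fun e => decide (e ≤ a)) = 0 := by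
    rw [List.countP_eq_zero]
    intro e he
    obtain ⟨i, hi, rfl⟩ := List.mem_iff_getElem.mp he
    rw [List.getElem_drop (h := by omega)]
    simp only [decide_eq_true_eq, not_le]
    have : l[k] ≤ l[k + i]'(by omega) := sorted_getElem_mono hl (Nat.le_add_right _ _) (by omega)
    linarith
  have hsplit := List.countP_append (p := fun e => decide (e ≤ a)) (l₁ := (l.take k)) (l₂ := (l.drop k))
  rw [List.take_append_drop] at hsplit
  have htake : (l.take k).countP (fun e => decide (e ≤ a)) ≤ k := by
    calc _ ≤ (l.take k).length := List.countP_le_length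
    _ ≤ k := by simp [List.length_take]
  omega

lemma sorted_ge_of_countP {l : List ℝ} (hl : l.Pairwise (· ≤ ·)) {k : ℕ} (hk : k < l.length)
    {a : ℝ} (h : l.length - k ≤ l.countP (fun e => decide (a ≤ e))) : a ≤ l[k] := by
  by_contra hc
  push_neg at hc
  have htake : (l.take (k+1)).countP (fun e => decide (a ≤ e)) = 0 := by
    rw [List.countP_eq_zero]
    intro e he
    obtain ⟨i, hi, rfl⟩ := List.mem_take_iff_getElem.mp he
    simp only [decide_eq_true_eq, not_le]
    have : l[i]'(by omega) ≤ l[k] := sorted_getElem_mono hl (by omega) hk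
    calc _ ≤ l[k] := this
    _ < a := hc
  have hsplit := List.countP_append (p := fun e => decide (a ≤ e)) (l₁ := (l.take (k+1))) (l₂ := (l.drop (k+1)))
  rw [List.take_append_drop] at hsplit
  have hdrop : (l.drop (k+1)).countP (fun e => decide (a ≤ e)) ≤ l.length - (k+1) := by
    calc _ ≤ (l.drop (k+1)).length := List.countP_le_length
    _ = l.length - (k+1) := List.length_drop
  omega

lemma countP_self_le {l : List ℝ} (hl : l.Pairwise (· ≤ ·)) {k : ℕ} (hk : k < l.length) :
    k + 1 ≤ l.countP (fun e => decide (e ≤ l[k])) := by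
  have hsplit := List.countP_append (p := fun e => decide (e ≤ l[k])) (l₁ := (l.take (k+1))) (l₂ := (l.drop (k+1)))
  rw [List.take_append_drop] at hsplit
  have htake : (l.take (k+1)).countP (fun e => decide (e ≤ l[k])) = (l.take (k+1)).length := by
    rw [List.countP_eq_length]
    intro e he
    obtain ⟨i, hi, rfl⟩ := List.mem_take_iff_getElem.mp he
    simpa using sorted_getElem_mono hl (i := i) (by omega) hk
  have : (l.take (k+1)).length = k + 1 := by simp [List.length_take]; omega
  omega

lemma countP_self_ge {l : List ℝ} (hl : l.Pairwise (· ≤ ·)) {k : ℕ} (hk : k < l.length) :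
    l.length - k ≤ l.countP (fun e => decide (l[k] ≤ e)) := by
  have hlen := (List.length_drop (i := k) (l := l))
  have hsplit := List.countP_append (p := fun e => decide (l[k] ≤ e)) (l₁ := (l.take k)) (l₂ := (l.drop k))
  rw [List.take_append_drop] at hsplit
  have hdrop : (l.drop k).countP (fun e => decide (l[k] ≤ e)) = (l.drop k).length := by
    rw [List.countP_eq_length]
    intro e he
    obtain ⟨i, hi, rfl⟩ := List.mem_iff_getElem.mp he
    rw [List.getElem_drop (h := by omega)]
    simp only [decide_eq_true_eq]
    exact sorted_getElem_mono hl (Nat.le_add_right _ _) (by omega)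
  omega
end COPYHELPERS

lemma countP_sort_eq (s : Multiset ℝ) (p : ℝ → Prop) [DecidablePred p] :
    (Multiset.sort s (· ≤ ·)).countP (fun e => decide (p e)) = Multiset.countP p s := by
  conv_rhs => rw [← Multiset.sort_eq s (· ≤ ·)]
  rw [Multiset.coe_countP]

lemma ub_of_count (t : Multiset ℝ) (a : ℝ) (k : ℕ) (hk : k < Multiset.card t)
    (h : k + 1 ≤ Multiset.countP (fun e => e ≤ a) t) :
    (Multiset.sort t (· ≤ ·)).getD k 0 ≤ a := by
  have hlen : k < (Multiset.sort t (· ≤ ·)).length := by rwa [Multiset.length_sort]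
  rw [List.getD_eq_getElem _ _ hlen]
  exact sorted_le_of_countP (Multiset.pairwise_sort _ _) hlen (by rwa [countP_sort_eq])

lemma lb_of_count (t : Multiset ℝ) (a : ℝ) (k : ℕ) (hk : k < Multiset.card t)
    (h : Multiset.card t - k ≤ Multiset.countP (fun e => a ≤ e) t) :
    a ≤ (Multiset.sort t (· ≤ ·)).getD k 0 := by
  have hlen : k < (Multiset.sort t (· ≤ ·)).length := by rwa [Multiset.length_sort]
  rw [List.getD_eq_getElem _ _ hlen]
  refine sorted_ge_of_countP (Multiset.pairwise_sort _ _) hlen ?_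
  rw [countP_sort_eq, Multiset.length_sort]; exact h

lemma orderLB {s t : Multiset ℝ} (hst : s ≤ t) {k : ℕ} (hk : k < Multiset.card s) :
    (Multiset.sort t (· ≤ ·)).getD k 0 ≤ (Multiset.sort s (· ≤ ·)).getD k 0 := by
  have hks : k < (Multiset.sort s (· ≤ ·)).length := by rwa [Multiset.length_sort]
  have hcard : Multiset.card s ≤ Multiset.card t := Multiset.card_le_card hst
  set a := (Multiset.sort s (· ≤ ·)).getD k 0 with ha
  have h1 : k + 1 ≤ Multiset.countP (fun e => e ≤ a) s := by
    rw [← countP_sort_eq]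
    have := countP_self_le (Multiset.pairwise_sort s (· ≤ ·)) hks
    rwa [ha, List.getD_eq_getElem _ _ hks]
  exact ub_of_count t a k (lt_of_lt_of_le hk hcard)
    (le_trans h1 (Multiset.countP_le_of_le _ hst))

lemma orderUB {s t : Multiset ℝ} (hst : s ≤ t) {k : ℕ} (hk : k < Multiset.card s) :
    (Multiset.sort s (· ≤ ·)).getD k 0 ≤
      (Multiset.sort t (· ≤ ·)).getD (k + (Multiset.card t - Multiset.card s)) 0 := by
  have hks : k < (Multiset.sort s (· ≤ ·)).length := by rwa [Multiset.length_sort]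
  have hcard : Multiset.card s ≤ Multiset.card t := Multiset.card_le_card hst
  set a := (Multiset.sort s (· ≤ ·)).getD k 0 with ha
  have h1 : Multiset.card s - k ≤ Multiset.countP (fun e => a ≤ e) s := by
    rw [← countP_sort_eq]
    have := countP_self_ge (Multiset.pairwise_sort s (· ≤ ·)) hks
    rw [Multiset.length_sort] at this
    rwa [ha, List.getD_eq_getElem _ _ hks]
  refine lb_of_count t a _ (by omega) ?_
  calc Multiset.card t - (k + (Multiset.card t - Multiset.card s))
      = Multiset.card s - k := by omega
    _ ≤ Multiset.countP (fun e => a ≤ e) s := h1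
    _ ≤ _ := Multiset.countP_le_of_le _ hst

/-- Halving (convergence) property. -/
theorem stmt_3 (n f : ℕ) (hn : 3 * f < n) (x y : Fin n → ℝ) (G : Finset (Fin n))
    (hG : Gᶜ.card ≤ f) (hxy : ∀ i ∈ G, x i = y i) :
    |ftMid n f x - ftMid n f y| ≤
      (G.sup' (nonempty_of_compl hn hG) x - G.inf' (nonempty_of_compl hn hG) x) / 2 := by
  classical
  have hGne := nonempty_of_compl hn hG
  set m := G.inf' hGne x with hm
  set M := G.sup' hGne x with hM
  set s : Multiset ℝ := Multiset.map x G.val with hs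
  have hys : Multiset.map y G.val = s := Multiset.map_congr rfl (fun i hi => (hxy i hi).symm)
  have hcards : Multiset.card s = G.card := by simp [hs]
  have hcardG : n - f ≤ G.card ∧ G.card ≤ n := by
    have h1 := Finset.card_compl G
    simp only [Fintype.card_fin] at h1
    constructor
    · omega
    · simpa using Finset.card_le_card (Finset.subset_univ G)
  set g := G.card with hg
  set tx := Multiset.map x (Finset.univ : Finset (Fin n)).val with htx
  set ty := Multiset.map y (Finset.univ : Finset (Fin n)).val with hty
  have hsub : G.val ≤ (Finset.univ : Finset (Fin n)).val :=
    Finset.val_le_iff.mpr (Finset.subset_univ G)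
  have hsx : s ≤ tx := Multiset.map_le_map hsub
  have hsy : s ≤ ty := hys ▸ Multiset.map_le_map hsub
  have hctx : Multiset.card tx = n := by simp [htx]
  have hcty : Multiset.card ty = n := by simp [hty]
  -- all elements of s lie in [m, M]
  have hmemlb : Multiset.countP (fun e => m ≤ e) s = g := by
    rw [Multiset.countP_eq_card.mpr, hcards]
    intro a hamem
    obtain ⟨i, hi, rfl⟩ := Multiset.mem_map.mp hamem
    exact Finset.inf'_le x hi
  have hmemub : Multiset.countP (fun e => e ≤ M) s = g := by
    rw [Multiset.countP_eq_card.mpr, hcards]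
    intro a hamem
    obtain ⟨i, hi, rfl⟩ := Multiset.mem_map.mp hamem
    exact Finset.le_sup' x hi
  set A := (Multiset.sort s (· ≤ ·)).getD f 0 with hA
  set B := (Multiset.sort s (· ≤ ·)).getD (n - f - 1 - (n - g)) 0 with hB
  have hAB : A ≤ B := by
    have hlen : n - f - 1 - (n - g) < (Multiset.sort s (· ≤ ·)).length := by
      rw [Multiset.length_sort, hcards]; omega
    rw [hA, hB, List.getD_eq_getElem _ _ (by rw [Multiset.length_sort, hcards]; omega),
      List.getD_eq_getElem _ _ hlen]
    exact sorted_getElem_mono (Multiset.pairwise_sort _ _) (by rw [Multiset.length_sort] at hlen; omega) hlen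
  -- bounds for x
  have key : ∀ t : Multiset ℝ, s ≤ t → Multiset.card t = n →
      (m ≤ (Multiset.sort t (· ≤ ·)).getD f 0 ∧ (Multiset.sort t (· ≤ ·)).getD f 0 ≤ A) ∧
      (B ≤ (Multiset.sort t (· ≤ ·)).getD (n - f - 1) 0 ∧
        (Multiset.sort t (· ≤ ·)).getD (n - f - 1) 0 ≤ M) := by
    intro t hst hct
    have hcst : Multiset.card s ≤ Multiset.card t := Multiset.card_le_card hst
    refine ⟨⟨?_, ?_⟩, ?_, ?_⟩
    · refine lb_of_count t m f (by omega) ?_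
      calc Multiset.card t - f = n - f := by omega
        _ ≤ g := hcardG.1
        _ = Multiset.countP (fun e => m ≤ e) s := hmemlb.symm
        _ ≤ _ := Multiset.countP_le_of_le _ hst
    · exact orderLB hst (by rw [hcards]; omega)
    · have := orderUB hst (k := n - f - 1 - (n - g)) (by rw [hcards]; omega)
      rw [hct, hcards] at this
      have hidx : n - f - 1 - (n - g) + (n - g) = n - f - 1 := by omega
      rwa [hidx] at this
    · refine ub_of_count t M (n - f - 1) (by omega) ?_
      calc n - f - 1 + 1 = n - f := by omega
        _ ≤ g := hcardG.1
        _ = Multiset.countP (fun e => e ≤ M) s := hmemub.symm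
        _ ≤ _ := Multiset.countP_le_of_le _ hst
  obtain ⟨⟨hx1, hx2⟩, hx3, hx4⟩ := key tx hsx hctx
  obtain ⟨⟨hy1, hy2⟩, hy3, hy4⟩ := key ty hsy hcty
  have hax : orderStat x (f + 1) = (Multiset.sort tx (· ≤ ·)).getD f 0 := by
    simp [orderStat, htx]
  have hbx : orderStat x (n - f) = (Multiset.sort tx (· ≤ ·)).getD (n - f - 1) 0 := by
    simp [orderStat, htx]
  have hay : orderStat y (f + 1) = (Multiset.sort ty (· ≤ ·)).getD f 0 := by
    simp [orderStat, hty]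
  have hby : orderStat y (n - f) = (Multiset.sort ty (· ≤ ·)).getD (n - f - 1) 0 := by
    simp [orderStat, hty]
  rw [ftMid, ftMid, hax, hbx, hay, hby, abs_le]
  constructor <;> [linarith; linarith]
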